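/- Let A be a graded-commutative ℚ-algebra and E = Λ(ι_1,...,ι_s) an exterior algebra on degree-1 generators. Suppose φ : A → E ⊗ A is an algebra homomorphism with (ε ⊗ id) ∘ φ = id, where ε : E → ℚ is the augmentation. If A is finite-dimensional over ℚ and has no nonzero derivations of negative degree, then φ(u) = 1 ⊗ u for all u ∈ A. -/

import Mathlib

structure GradedDerivation (R : Type*) [Ring R] [Algebra ℚ R]
    (𝒜 : ℤ → Submodule ℚ R) (d : ℤ) where
  toLin : R →ₗ[ℚ] R
  mem_of_mem : ∀ (n : ℤ) (u : R), u ∈ 𝒜 n → toLin u ∈ 𝒜 (n + d)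
  leibniz : ∀ (m n : ℤ) (u v : R), u ∈ 𝒜 m → v ∈ 𝒜 n →
    toLin (u * v) = toLin u * v + ((-1 : ℚ) ^ (d * m)) • (u * toLin v)

def IsGradedComm (R : Type*) [Ring R] [Algebra ℚ R] (𝒜 : ℤ → Submodule ℚ R) : Prop :=
  ∀ (m n : ℤ) (u v : R), u ∈ 𝒜 m → v ∈ 𝒜 n → u * v = ((-1 : ℚ) ^ (m * n)) • (v * u)

def NoNegativeDerivations (R : Type*) [Ring R] [Algebra ℚ R] (𝒜 : ℤ → Submodule ℚ R) : Prop :=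
  ∀ d : ℤ, d < 0 → ∀ D : GradedDerivation R 𝒜 d, D.toLin = 0
/-- The ordered product `ι_I = ι_{i₁} ⋯ ι_{i_k}` for `I = {i₁ < … < i_k}`. -/
def orderedProd {B : Type*} [Ring B] {s : ℕ} (ι : Fin s → B) (I : Finset (Fin s)) : B :=
  ((I.sort (· ≤ ·)).map ι).prod

section Aux
variable {B : Type*} [Ring B] [Algebra ℚ B] {s : ℕ} (ι : Fin s → B)

omit [Algebra ℚ B] in
lemma aux_perm (hanti : ∀ a b : Fin s, ι a * ι b = -(ι b * ι a)) :
    ∀ {l₁ l₂ : List (Fin s)}, l₁.Perm l₂ →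
      (l₁.map ι).prod = (l₂.map ι).prod ∨ (l₁.map ι).prod = -(l₂.map ι).prod := by
  intro l₁ l₂ h
  induction h with
  | nil => exact Or.inl rfl
  | cons x _ ih =>
      simp only [List.map_cons, List.prod_cons]
      rcases ih with h | h
      · exact Or.inl (by rw [h])
      · exact Or.inr (by rw [h, mul_neg])
  | swap x y l =>
      simp only [List.map_cons, List.prod_cons, ← mul_assoc]
      exact Or.inr (by rw [hanti y x, neg_mul])
  | trans _ _ ih₁ ih₂ =>
      rcases ih₁ with h₁ | h₁ <;> rcases ih₂ with h₂ | h₂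
      · exact Or.inl (h₁.trans h₂)
      · exact Or.inr (h₁.trans h₂)
      · exact Or.inr (by rw [h₁, h₂])
      · exact Or.inl (by rw [h₁, h₂, neg_neg])

omit [Algebra ℚ B] in
lemma aux_dup (hanti : ∀ a b : Fin s, ι a * ι b = -(ι b * ι a))
    (hsq : ∀ a : Fin s, ι a * ι a = 0)
    {l : List (Fin s)} (h : ¬ l.Nodup) : (l.map ι).prod = 0 := by
  rw [List.nodup_iff_count_le_one] at h
  push_neg at h
  obtain ⟨a, ha⟩ := h
  have hmem : a ∈ l := by
    rw [← List.count_pos_iff]; omega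
  have h1 : l.Perm (a :: l.erase a) := List.perm_cons_erase hmem
  have hmem2 : a ∈ l.erase a := by
    rw [← List.count_pos_iff, List.count_erase_self]; omega
  have h2 : (l.erase a).Perm (a :: (l.erase a).erase a) := List.perm_cons_erase hmem2
  have h3 : l.Perm (a :: a :: (l.erase a).erase a) := h1.trans (h2.cons a)
  have hz : ((a :: a :: (l.erase a).erase a).map ι).prod = 0 := by
    simp only [List.map_cons, List.prod_cons, ← mul_assoc, hsq, zero_mul]
  rcases aux_perm ι hanti h3 with h | h
  · rw [h, hz]
  · rw [h, hz, neg_zero]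

lemma aux_prod_mem (ℬ : ℤ → Submodule ℚ B) [SetLike.GradedMonoid ℬ]
    (hι : ∀ i, ι i ∈ ℬ 1) :
    ∀ l : List (Fin s), (l.map ι).prod ∈ ℬ (l.length : ℤ) := by
  intro l
  induction l with
  | nil => simpa using SetLike.one_mem_graded ℬ
  | cons x t ih =>
      simp only [List.map_cons, List.prod_cons, List.length_cons]
      have := SetLike.mul_mem_graded (hι x) ih
      convert this using 2
      push_cast; ring

lemma aux_ordered_mem (ℬ : ℤ → Submodule ℚ B) [SetLike.GradedMonoid ℬ]
    (hι : ∀ i, ι i ∈ ℬ 1) (I : Finset (Fin s)) :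
    orderedProd ι I ∈ ℬ (I.card : ℤ) := by
  have := aux_prod_mem ι ℬ hι (I.sort (· ≤ ·))
  rwa [Finset.length_sort] at this

lemma aux_Q (hanti : ∀ a b : Fin s, ι a * ι b = -(ι b * ι a))
    (hsq : ∀ a : Fin s, ι a * ι a = 0) (I J : Finset (Fin s)) :
    ∃ q : ℚ, orderedProd ι I * orderedProd ι J = q • orderedProd ι (I ∪ J) ∧
      (¬ Disjoint I J → q = 0) ∧ (I = ∅ → q = 1) ∧ (J = ∅ → q = 1) := by
  have happ : orderedProd ι I * orderedProd ι J
      = (((I.sort (· ≤ ·)) ++ (J.sort (· ≤ ·))).map ι).prod := by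
    rw [List.map_append, List.prod_append]; rfl
  by_cases hd : Disjoint I J
  · by_cases hI : I = ∅
    · refine ⟨1, ?_, fun h => absurd hd h, fun _ => rfl, fun _ => rfl⟩
      subst hI
      simp [orderedProd, one_smul]
    · by_cases hJ : J = ∅
      · refine ⟨1, ?_, fun h => absurd hd h, fun h => absurd h hI, fun _ => rfl⟩
        subst hJ
        simp [orderedProd, one_smul]
      · have hperm : ((I.sort (· ≤ ·)) ++ (J.sort (· ≤ ·))).Perm ((I ∪ J).sort (· ≤ ·)) := by
          rw [← Multiset.coe_eq_coe, ← Multiset.coe_add,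
            Finset.sort_eq, Finset.sort_eq, Finset.sort_eq,
            ← Finset.disjUnion_eq_union I J hd]
          rfl
        rcases aux_perm ι hanti hperm with h | h
        · exact ⟨1, by rw [happ, h, one_smul]; rfl,
            fun h => absurd hd h, fun h => absurd h hI, fun h => absurd h hJ⟩
        · exact ⟨-1, by rw [happ, h, neg_smul, one_smul]; rfl,
            fun h => absurd hd h, fun h => absurd h hI, fun h => absurd h hJ⟩
  · refine ⟨0, ?_, fun _ => rfl, ?_, ?_⟩
    · rw [happ, zero_smul]
      apply aux_dup ι hanti hsq
      intro hnd
      rcases Finset.not_disjoint_iff.mp hd with ⟨a, haI, haJ⟩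
      have := List.disjoint_of_nodup_append hnd
      exact this ((Finset.mem_sort _).mpr haI) ((Finset.mem_sort _).mpr haJ)
    · rintro rfl; exact absurd (by simp) hd
    · rintro rfl; exact absurd (by simp) hd

end Aux

theorem stmt8 (A B : Type*) [Ring A] [Algebra ℚ A] [Ring B] [Algebra ℚ B]
    (𝒜 : ℤ → Submodule ℚ A) (ℬ : ℤ → Submodule ℚ B) [GradedRing 𝒜] [GradedRing ℬ]
    (hcA : IsGradedComm A 𝒜) (hcB : IsGradedComm B ℬ)
    [FiniteDimensional ℚ A] (hno : NoNegativeDerivations A 𝒜)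
    (s : ℕ) (ι : Fin s → B) (hι : ∀ i, ι i ∈ ℬ 1)
    (j : A →ₐ[ℚ] B) (hj : ∀ (n : ℤ) (a : A), a ∈ 𝒜 n → j a ∈ ℬ n)
    (hfree : Function.Bijective fun c : Finset (Fin s) → A =>
      ∑ I : Finset (Fin s), orderedProd ι I * j (c I))
    (φ : A →ₐ[ℚ] B) (hφdeg : ∀ (n : ℤ) (a : A), a ∈ 𝒜 n → φ a ∈ ℬ n)
    (hφ : ∀ a : A, ∃ c : Finset (Fin s) → A,
      (φ a = ∑ I : Finset (Fin s), orderedProd ι I * j (c I)) ∧ c ∅ = a) :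
    ∀ u : A, φ u = j u := by
  classical
  -- the generators anticommute and square to zero
  have hanti : ∀ a b : Fin s, ι a * ι b = -(ι b * ι a) := by
    intro a b
    have := hcB 1 1 (ι a) (ι b) (hι a) (hι b)
    rw [this]; norm_num
  have hsq : ∀ a : Fin s, ι a * ι a = 0 := by
    intro a
    have h := hanti a a
    have h2 : ι a * ι a + ι a * ι a = 0 := add_eq_zero_iff_eq_neg.mpr h
    have h3 : (2 : ℚ) • (ι a * ι a) = 0 := by
      rw [two_smul]; exact h2
    have := congrArg (fun x => (2 : ℚ)⁻¹ • x) h3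
    simpa [smul_smul] using this
  -- the linear map T
  set T : (Finset (Fin s) → A) →ₗ[ℚ] B :=
    { toFun := fun c => ∑ I : Finset (Fin s), orderedProd ι I * j (c I)
      map_add' := by
        intro c c'
        simp [map_add, mul_add, Finset.sum_add_distrib]
      map_smul' := by
        intro q c
        simp [map_smul, mul_smul_comm, Finset.smul_sum] } with hT
  have hTapp : ∀ c, T c = ∑ I : Finset (Fin s), orderedProd ι I * j (c I) := fun _ => rfl
  have hTbij : Function.Bijective T := hfree
  set e : (Finset (Fin s) → A) ≃ₗ[ℚ] B := LinearEquiv.ofBijective T hTbij with he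
  have heT : ∀ c, e c = T c := fun _ => rfl
  -- the coordinate maps
  set lam : Finset (Fin s) → A →ₗ[ℚ] A :=
    fun I => (LinearMap.proj I).comp ((e.symm : B →ₗ[ℚ] (Finset (Fin s) → A)).comp
      φ.toLinearMap) with hlam
  have hlamapp : ∀ I a, lam I a = e.symm (φ a) I := fun _ _ => rfl
  have hrep : ∀ a : A, φ a = T (fun I => lam I a) := by
    intro a
    have : (fun I => lam I a) = e.symm (φ a) := funext fun I => hlamapp I a
    rw [this, ← heT, e.apply_symm_apply]
  have huniq : ∀ (a : A) (c : Finset (Fin s) → A), φ a = T c → ∀ I, lam I a = c I := by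
    intro a c h I
    have : (fun I => lam I a) = c := hTbij.1 ((hrep a).symm.trans h)
    exact congrFun this I
  have hlam0 : ∀ a : A, lam ∅ a = a := by
    intro a
    obtain ⟨c, hc, hc0⟩ := hφ a
    rw [huniq a c (by rw [hTapp]; exact hc) ∅, hc0]
  -- degree shift of the coordinate maps
  have hdeg : ∀ (n : ℤ) (a : A), a ∈ 𝒜 n → ∀ I : Finset (Fin s),
      lam I a ∈ 𝒜 (n - I.card) := by
    intro n a ha I
    set π : B →+ B := AddMonoidHom.mk' (fun x => (DirectSum.decompose ℬ x n : B)) (by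
      intro x y
      simp [DirectSum.decompose_add]) with hπ
    have hπapp : ∀ x, π x = (DirectSum.decompose ℬ x n : B) := fun _ => rfl
    have hπmem : ∀ (d : ℤ) (x : B), x ∈ ℬ d → π x = if d = n then x else 0 := by
      intro d x hx
      by_cases h : d = n
      · subst h; rw [hπapp, DirectSum.decompose_of_mem_same ℬ hx, if_pos rfl]
      · rw [hπapp, DirectSum.decompose_of_mem_ne ℬ hx h, if_neg h]
    set c' : Finset (Fin s) → A :=
      fun I => (DirectSum.decompose 𝒜 (lam I a) (n - I.card) : A) with hc'
    have key : φ a = T c' := by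
      have h1 : π (φ a) = φ a := by
        rw [hπmem n (φ a) (hφdeg n a ha), if_pos rfl]
      conv_lhs => rw [← h1, hrep a, hTapp]
      rw [map_sum, hTapp]
      refine Finset.sum_congr rfl ?_
      intro I _
      have hbI : lam I a = ∑ m ∈ (DirectSum.decompose 𝒜 (lam I a)).support,
          (DirectSum.decompose 𝒜 (lam I a) m : A) := (DirectSum.sum_support_decompose 𝒜 _).symm
      calc π (orderedProd ι I * j (lam I a))
          = ∑ m ∈ (DirectSum.decompose 𝒜 (lam I a)).support,
              π (orderedProd ι I * j (DirectSum.decompose 𝒜 (lam I a) m : A)) := by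
            conv_lhs => rw [hbI]
            rw [map_sum, Finset.mul_sum, map_sum]
        _ = ∑ m ∈ (DirectSum.decompose 𝒜 (lam I a)).support,
              if m = n - I.card then
                orderedProd ι I * j (DirectSum.decompose 𝒜 (lam I a) m : A) else 0 := by
            refine Finset.sum_congr rfl ?_
            intro m _
            have hmem : orderedProd ι I * j (DirectSum.decompose 𝒜 (lam I a) m : A)
                ∈ ℬ ((I.card : ℤ) + m) :=
              SetLike.mul_mem_graded (aux_ordered_mem ι ℬ hι I) (hj m _ (SetLike.coe_mem _))
            rw [hπmem _ _ hmem]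
            simp only [show ((I.card : ℤ) + m = n) ↔ (m = n - I.card) by omega]
        _ = orderedProd ι I * j (c' I) := by
            rw [Finset.sum_ite_eq' (DirectSum.decompose 𝒜 (lam I a)).support (n - I.card)]
            by_cases hm : n - (I.card : ℤ) ∈ (DirectSum.decompose 𝒜 (lam I a)).support
            · rw [if_pos hm]
            · rw [if_neg hm]
              have hz : (DirectSum.decompose 𝒜 (lam I a) (n - I.card) : A) = 0 := by
                rw [DFinsupp.notMem_support_iff] at hm
                rw [hm]; rfl
              rw [hc']
              simp only [hz, map_zero, mul_zero]
    have := huniq a c' key I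
    rw [this, hc']
    exact SetLike.coe_mem _
  -- structure constants for products of ordered monomials
  choose Q hQ1 hQ2 hQ3 hQ4 using fun I J => aux_Q ι hanti hsq I J
  by_cases hS : ∀ I : Finset (Fin s), I ≠ ∅ → lam I = 0
  · intro u
    have h1 : ∀ I ∈ Finset.univ, I ≠ (∅ : Finset (Fin s)) →
        orderedProd ι I * j (lam I u) = 0 := by
      intro I _ hI
      rw [hS I hI]
      simp
    rw [hrep u, hTapp,
      Finset.sum_eq_single ∅ h1 (fun h => absurd (Finset.mem_univ ∅) h), hlam0,
      show orderedProd ι (∅ : Finset (Fin s)) = 1 by simp [orderedProd], one_mul]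
  · exfalso
    push_neg at hS
    obtain ⟨I₁, hI₁ne, hI₁⟩ := hS
    have hex : ∃ k : ℕ, ∃ I : Finset (Fin s), I.card = k ∧ I ≠ ∅ ∧ lam I ≠ 0 :=
      ⟨I₁.card, I₁, rfl, Finset.nonempty_iff_ne_empty.mp hI₁ne, hI₁⟩
    set k := Nat.find hex with hk
    obtain ⟨I₀, hI₀card, hI₀ne, hI₀⟩ := Nat.find_spec hex
    have hmin : ∀ J : Finset (Fin s), J ≠ ∅ → J.card < k → lam J = 0 := by
      intro J hJne hJcard
      by_contra hJ
      exact Nat.find_min hex hJcard ⟨J, rfl, hJne, hJ⟩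
    have hkpos : 1 ≤ k := by
      obtain ⟨x, hx⟩ := Finset.nonempty_iff_ne_empty.mpr hI₀ne
      have := Finset.card_pos.mpr ⟨x, hx⟩
      omega
    have hlei : ∀ (m n : ℤ) (u v : A), u ∈ 𝒜 m → v ∈ 𝒜 n →
        lam I₀ (u * v) = lam I₀ u * v + ((-1 : ℚ) ^ ((-(k : ℤ)) * m)) • (u * lam I₀ v) := by
      intro m n u v hu hv
      set w : Finset (Fin s) × Finset (Fin s) → A := fun p =>
        (((-1 : ℚ) ^ ((m - p.1.card) * (p.2.card : ℤ))) * Q p.1 p.2) •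
          (lam p.1 u * lam p.2 v) with hw
      have hterm : ∀ p : Finset (Fin s) × Finset (Fin s),
          (orderedProd ι p.1 * j (lam p.1 u)) * (orderedProd ι p.2 * j (lam p.2 v))
            = orderedProd ι (p.1 ∪ p.2) * j (w p) := by
        intro p
        have h1 : j (lam p.1 u) * orderedProd ι p.2
            = ((-1 : ℚ) ^ ((m - p.1.card) * (p.2.card : ℤ))) •
                (orderedProd ι p.2 * j (lam p.1 u)) :=
          hcB _ _ _ _ (hj _ _ (hdeg m u hu p.1)) (aux_ordered_mem ι ℬ hι p.2)
        calc (orderedProd ι p.1 * j (lam p.1 u)) * (orderedProd ι p.2 * j (lam p.2 v))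
            = orderedProd ι p.1 * (j (lam p.1 u) * orderedProd ι p.2) * j (lam p.2 v) := by
              simp only [mul_assoc]
          _ = ((-1 : ℚ) ^ ((m - p.1.card) * (p.2.card : ℤ))) •
                ((orderedProd ι p.1 * orderedProd ι p.2) * (j (lam p.1 u) * j (lam p.2 v))) := by
              rw [h1]
              rw [mul_smul_comm, smul_mul_assoc]
              congr 1
              simp only [mul_assoc]
          _ = ((-1 : ℚ) ^ ((m - p.1.card) * (p.2.card : ℤ))) •
                ((Q p.1 p.2 • orderedProd ι (p.1 ∪ p.2)) *
                  (j (lam p.1 u) * j (lam p.2 v))) := by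
              rw [hQ1]
          _ = orderedProd ι (p.1 ∪ p.2) * j (w p) := by
              rw [hw]
              simp only [map_smul, map_mul, smul_mul_assoc, mul_smul_comm, smul_smul]
      set c'' : Finset (Fin s) → A := fun K =>
        ∑ p ∈ Finset.univ.filter
            (fun p : Finset (Fin s) × Finset (Fin s) => p.1 ∪ p.2 = K), w p with hc''
      have key : φ (u * v) = T c'' := by
        rw [map_mul, hrep u, hrep v, hTapp, hTapp, Finset.sum_mul_sum, hTapp]
        calc ∑ I : Finset (Fin s), ∑ J : Finset (Fin s),
              (orderedProd ι I * j (lam I u)) * (orderedProd ι J * j (lam J v))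
            = ∑ p : Finset (Fin s) × Finset (Fin s),
                (orderedProd ι p.1 * j (lam p.1 u)) * (orderedProd ι p.2 * j (lam p.2 v)) := by
              rw [← Finset.sum_product']
              rfl
          _ = ∑ p : Finset (Fin s) × Finset (Fin s), orderedProd ι (p.1 ∪ p.2) * j (w p) := by
              exact Finset.sum_congr rfl fun p _ => hterm p
          _ = ∑ K : Finset (Fin s), ∑ p ∈ Finset.univ.filter
                (fun p : Finset (Fin s) × Finset (Fin s) => p.1 ∪ p.2 = K),
                orderedProd ι (p.1 ∪ p.2) * j (w p) := by
              rw [Finset.sum_fiberwise]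
          _ = ∑ K : Finset (Fin s), orderedProd ι K * j (c'' K) := by
              refine Finset.sum_congr rfl ?_
              intro K _
              rw [hc'', map_sum, Finset.mul_sum]
              refine Finset.sum_congr rfl ?_
              intro p hp
              rw [Finset.mem_filter] at hp
              rw [hp.2]
      have hval : lam I₀ (u * v) = c'' I₀ := huniq _ _ key I₀
      have hpairne : ((∅ : Finset (Fin s)), I₀) ≠ (I₀, (∅ : Finset (Fin s))) := by
        intro h
        exact hI₀ne (by rw [← (Prod.mk.injEq _ _ _ _).mp h |>.1])
      have hsub : ({((∅ : Finset (Fin s)), I₀), (I₀, (∅ : Finset (Fin s)))} :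
          Finset (Finset (Fin s) × Finset (Fin s))) ⊆ Finset.univ.filter
            (fun p : Finset (Fin s) × Finset (Fin s) => p.1 ∪ p.2 = I₀) := by
        intro p hp
        rw [Finset.mem_insert, Finset.mem_singleton] at hp
        rw [Finset.mem_filter]
        rcases hp with rfl | rfl
        · exact ⟨Finset.mem_univ _, by simp⟩
        · exact ⟨Finset.mem_univ _, by simp⟩
      have hvan : ∀ p ∈ Finset.univ.filter
          (fun p : Finset (Fin s) × Finset (Fin s) => p.1 ∪ p.2 = I₀),
          p ∉ ({((∅ : Finset (Fin s)), I₀), (I₀, (∅ : Finset (Fin s)))} :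
            Finset (Finset (Fin s) × Finset (Fin s))) → w p = 0 := by
        intro p hp hnp
        rw [Finset.mem_filter] at hp
        have hpu := hp.2
        rw [Finset.mem_insert, Finset.mem_singleton] at hnp
        push_neg at hnp
        by_cases h1 : p.1 = ∅
        · exact absurd (by rw [Prod.ext_iff]; exact ⟨h1, by rw [← hpu, h1, Finset.empty_union]⟩)
            hnp.1
        · by_cases h2 : p.2 = ∅
          · exact absurd (by rw [Prod.ext_iff]; exact ⟨by rw [← hpu, h2, Finset.union_empty], h2⟩)
              hnp.2
          · have hp1sub : p.1 ⊆ I₀ := hpu ▸ Finset.subset_union_left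
            have hp2sub : p.2 ⊆ I₀ := hpu ▸ Finset.subset_union_right
            by_cases hc1 : p.1.card < k
            · rw [hw]; simp only [hmin p.1 h1 hc1, LinearMap.zero_apply, zero_mul, smul_zero]
            · have hp1 : p.1 = I₀ :=
                Finset.eq_of_subset_of_card_le hp1sub (by omega)
              by_cases hc2 : p.2.card < k
              · rw [hw]; simp only [hmin p.2 h2 hc2, LinearMap.zero_apply, mul_zero, smul_zero]
              · have hp2 : p.2 = I₀ :=
                  Finset.eq_of_subset_of_card_le hp2sub (by omega)
                have hnd : ¬ Disjoint p.1 p.2 := by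
                  rw [hp1, hp2, disjoint_self, Finset.bot_eq_empty]
                  exact hI₀ne
                simp only [hw, hQ2 _ _ hnd, mul_zero, zero_smul]
      have hsum : c'' I₀ = w (∅, I₀) + w (I₀, ∅) := by
        have hr : c'' I₀ = ∑ p ∈ Finset.univ.filter
            (fun p : Finset (Fin s) × Finset (Fin s) => p.1 ∪ p.2 = I₀), w p := rfl
        rw [hr, ← Finset.sum_subset hsub hvan, Finset.sum_pair hpairne]
      have hw1 : w (∅, I₀) = ((-1 : ℚ) ^ (m * (k : ℤ))) • (u * lam I₀ v) := by
        rw [hw]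
        simp only [hQ3 _ _ rfl, mul_one, hlam0, Finset.card_empty, Nat.cast_zero, sub_zero,
          hI₀card]
        rfl
      have hw2 : w (I₀, ∅) = lam I₀ u * v := by
        rw [hw]
        simp only [hQ4 _ _ rfl, mul_one, hlam0, Finset.card_empty, Nat.cast_zero, mul_zero,
          zpow_zero, one_mul, one_smul]
      have hsign : ((-1 : ℚ) ^ ((-(k : ℤ)) * m)) = ((-1 : ℚ) ^ (m * (k : ℤ))) := by
        have h1 : ((-(k : ℤ)) * m) = -((k : ℤ) * m) := by ring
        have h2 : ((k : ℤ) * m) = m * (k : ℤ) := by ring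
        have h3 : ((-1 : ℚ) ^ ((k : ℤ) * m)) * ((-1 : ℚ) ^ ((k : ℤ) * m)) = 1 := by
          rw [← mul_zpow]; norm_num
        rw [h1, zpow_neg, inv_eq_of_mul_eq_one_left h3, h2]
      rw [hval, hsum, hw1, hw2, hsign]
      exact add_comm _ _
    rw [← hk] at hI₀card
    refine hI₀ (hno (-(k : ℤ)) (by omega)
      { toLin := lam I₀
        mem_of_mem := ?_
        leibniz := hlei })
    intro n u hu
    have h := hdeg n u hu I₀
    rw [hI₀card] at h
    rwa [sub_eq_add_neg] at h
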